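/- For the two-query instance under mechanism ONE with equally likely queries q₁ (ads A=(0.5,z₁), B=(0.6,z₂)) and q₂ (ads C=(0.5,z₁), D=(0.6,z₂), E=(0.2,z₂), F=(0.3,z₁)), all bids equal to 1, no prediction map f is self-calibrated: if f(z₁) > f(z₂) the observed CTRs are (z₁: 13/30, z₂: 0.6); if f(z₁) < f(z₂) they are (z₁: 0.5, z₂: 7/15); if f(z₁) = f(z₂) they are (z₁: 0.45, z₂: 0.5); in every case the observed CTR of some bucket differs from f of that bucket. -/
import Mathlib


open Classical

/- Mechanism ONE, all bids 1, two buckets z₁, z₂ and four equally likely queries: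
q₁ = {A=(p=0.5, z₁)}, q₂ = {B=(0.6, z₂)}, q₃ = {C=(0.5, z₁), D=(0.6, z₂)},
q₄ = {E=(0.2, z₂), F=(0.3, z₁)}.  On each query the candidate with maximal f(z)
shows, ties broken uniformly at random.  A prediction map is the pair (f1,f2). -/

/-- probability (given its query) that a z₁-ad facing a z₂-ad shows -/
noncomputable def w1 (f1 f2 : ℝ) : ℝ := if f1 > f2 then 1 else if f2 > f1 then 0 else 1/2
/-- probability (given its query) that a z₂-ad facing a z₁-ad shows -/
noncomputable def w2 (f1 f2 : ℝ) : ℝ := if f2 > f1 then 1 else if f1 > f2 then 0 else 1/2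

/-- observed CTR of bucket z₁ (ads A, C, F; A always shows on its query) -/
noncomputable def obsCTR1 (f1 f2 : ℝ) : ℝ :=
  (1 * 0.5 + w1 f1 f2 * 0.5 + w1 f1 f2 * 0.3) / (1 + w1 f1 f2 + w1 f1 f2)

/-- observed CTR of bucket z₂ (ads B, D, E; B always shows on its query) -/
noncomputable def obsCTR2 (f1 f2 : ℝ) : ℝ :=
  (1 * 0.6 + w2 f1 f2 * 0.6 + w2 f1 f2 * 0.2) / (1 + w2 f1 f2 + w2 f1 f2)

/-- No prediction map is self-calibrated for this instance: if `f1 > f2` the observed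
CTRs are (z₁ : 13/30, z₂ : 0.6); if `f1 < f2` they are (z₁ : 0.5, z₂ : 7/15); if
`f1 = f2` they are (z₁ : 0.45, z₂ : 0.5); and in every case the observed CTR of some
bucket differs from the predicted value for that bucket. -/
theorem no_self_calibrated_map :
    ∀ f1 f2 : ℝ, 0 ≤ f1 → f1 ≤ 1 → 0 ≤ f2 → f2 ≤ 1 →
      (f1 > f2 → obsCTR1 f1 f2 = 13/30 ∧ obsCTR2 f1 f2 = 0.6) ∧
      (f1 < f2 → obsCTR1 f1 f2 = 0.5 ∧ obsCTR2 f1 f2 = 7/15) ∧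
      (f1 = f2 → obsCTR1 f1 f2 = 0.45 ∧ obsCTR2 f1 f2 = 0.5) ∧
      ¬(obsCTR1 f1 f2 = f1 ∧ obsCTR2 f1 f2 = f2) := by
  intro f1 f2 _ _ _ _
  have h1 : f1 > f2 → obsCTR1 f1 f2 = 13/30 ∧ obsCTR2 f1 f2 = 0.6 := by
    intro h
    have hn : ¬ f2 > f1 := not_lt.mpr h.le
    simp [obsCTR1, obsCTR2, w1, w2, h, hn]
    norm_num
  have h2 : f1 < f2 → obsCTR1 f1 f2 = 0.5 ∧ obsCTR2 f1 f2 = 7/15 := by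
    intro h
    have hn : ¬ f1 > f2 := not_lt.mpr h.le
    simp [obsCTR1, obsCTR2, w1, w2, h, hn]
    norm_num
  have h3 : f1 = f2 → obsCTR1 f1 f2 = 0.45 ∧ obsCTR2 f1 f2 = 0.5 := by
    intro h
    simp [obsCTR1, obsCTR2, w1, w2, h]
    norm_num
  refine ⟨h1, h2, h3, ?_⟩
  rintro ⟨e1, e2⟩
  rcases lt_trichotomy f1 f2 with h | h | h
  · obtain ⟨a, b⟩ := h2 h
    rw [e1] at a; rw [e2] at b
    rw [a, b] at h; norm_num at h
  · obtain ⟨a, b⟩ := h3 h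
    rw [e1] at a; rw [e2] at b
    rw [a, b] at h; norm_num at h
  · obtain ⟨a, b⟩ := h1 h
    rw [e1] at a; rw [e2] at b
    rw [a, b] at h; norm_num at h
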